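/- Let d ≥ 2, let p_+, p_− ≥ 0 with p_+ + p_− = 1, let α_2, …, α_d ∈ ℝ and C > 0. Let f : ℝ^d → ℝ be continuous and bounded, whose restrictions to the closed half-spaces {x_1 ≥ 0} and {x_1 ≤ 0} are C² with bounded first and second partial derivatives, whose partial derivatives ∂_j f for j ≥ 2 are continuous on all of ℝ^d, and whose one-sided limits ∂_1 f|_+ and ∂_1 f|_− at the hyperplane {x_1 = 0} satisfy the gluing condition p_+ ∂_1 f|_+(x) − p_− ∂_1 f|_−(x) + Σ_{j=2}^d α_j ∂_j f(x) = 0 for every x with x_1 = 0. Let δ_n → 0 be positive reals, η_n ≥ 0 with η_n/δ_n → 0, let x_n ∈ ℝ^d with |x_{n,1}| ≤ η_n, and let Z_n be random vectors in ℝ^d such that: |Z_{n,1}| = δ_n almost surely; P(Z_{n,1} = δ_n) → p_+; for each j = 2, …, d, E[Z_{n,j} − x_{n,j}] = α_j δ_n + o(δ_n) and E[(Z_{n,j} − x_{n,j})²] ≤ C δ_n². Then (E[f(Z_n)] − f(x_n))/δ_n → 0 as n → ∞. -/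

import Mathlib

open MeasureTheory Filter Topology
open scoped BigOperators

lemma norm_fderiv_fderiv' {E : Type*} [NormedAddCommGroup E] [NormedSpace ℝ E]
    {g : E → ℝ} (z : E) :
    ‖fderiv ℝ (fderiv ℝ g) z‖ = ‖iteratedFDeriv ℝ 2 g z‖ := by
  rw [← norm_iteratedFDeriv_fderiv, ← norm_iteratedFDeriv_fderiv, norm_iteratedFDeriv_zero]

lemma taylor2 {E : Type*} [NormedAddCommGroup E] [NormedSpace ℝ E] {g : E → ℝ} {M : ℝ}
    (hg : ContDiff ℝ 2 g) (hM : ∀ z, ‖iteratedFDeriv ℝ 2 g z‖ ≤ M) (x y : E) :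
    ‖g y - g x - fderiv ℝ g x (y - x)‖ ≤ M * ‖y - x‖ ^ 2 := by
  have hdg : Differentiable ℝ (fderiv ℝ g) := by
    have := (hg.fderiv_right (m := 1) (by norm_num)).differentiable (by norm_num)
    exact this
  have key : ∀ z ∈ segment ℝ x y, ‖fderiv ℝ g z - fderiv ℝ g x‖ ≤ M * ‖y - x‖ := by
    intro z hz
    obtain ⟨t, ht0, ht1, rfl⟩ : ∃ t : ℝ, 0 ≤ t ∧ t ≤ 1 ∧ x + t • (y - x) = z := by
      rcases hz with ⟨a, b, ha, hb, hab, rfl⟩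
      refine ⟨b, hb, by linarith, ?_⟩
      have : a = 1 - b := by linarith
      subst this; module
    have h1 : ‖fderiv ℝ g (x + t • (y - x)) - fderiv ℝ g x‖ ≤ M * ‖x + t • (y - x) - x‖ := by
      apply Convex.norm_image_sub_le_of_norm_fderiv_le (fun z _ => hdg z)
        (fun z _ => by rw [norm_fderiv_fderiv']; exact hM z) convex_univ trivial trivial
    refine h1.trans ?_
    have : ‖x + t • (y - x) - x‖ ≤ ‖y - x‖ := by
      simp only [add_sub_cancel_left, norm_smul, Real.norm_eq_abs, abs_of_nonneg ht0]
      nlinarith [norm_nonneg (y - x)]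
    have hM0 : 0 ≤ M := le_trans (norm_nonneg _) (hM x)
    nlinarith
  have := Convex.norm_image_sub_le_of_norm_hasFDerivWithin_le'
    (f := g) (f' := fderiv ℝ g) (φ := fderiv ℝ g x) (C := M * ‖y - x‖)
    (fun z _ => ((hg.differentiable (by norm_num) z).hasFDerivAt).hasFDerivWithinAt)
    key (convex_segment x y) (left_mem_segment ℝ x y) (right_mem_segment ℝ x y)
  calc ‖g y - g x - (fderiv ℝ g x) (y - x)‖ ≤ M * ‖y - x‖ * ‖y - x‖ := this
    _ = M * ‖y - x‖ ^ 2 := by ring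

lemma clm_apply_eq_sum' {d : ℕ} (v : EuclideanSpace ℝ (Fin d))
    (L : EuclideanSpace ℝ (Fin d) →L[ℝ] ℝ) :
    L v = ∑ j, v j * L (EuclideanSpace.single j (1:ℝ)) := by
  have h := (EuclideanSpace.basisFun (Fin d) ℝ).sum_repr v
  conv_lhs => rw [← h]
  rw [map_sum]
  simp [EuclideanSpace.basisFun_apply, smul_eq_mul]

lemma euclidean_norm_sq' {d : ℕ} (v : EuclideanSpace ℝ (Fin d)) :
    ‖v‖ ^ 2 = ∑ i, v i ^ 2 := by
  rw [EuclideanSpace.norm_eq, Real.sq_sqrt (by positivity)]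
  simp [sq_abs]

theorem gluing_condition_limit (d : ℕ) [NeZero d] (hd : 2 ≤ d)
    (pp pm : ℝ) (hpp : 0 ≤ pp) (hpm : 0 ≤ pm) (hsum : pp + pm = 1)
    (α : Fin d → ℝ) (C : ℝ) (hC : 0 < C)
    (f fp fm : EuclideanSpace ℝ (Fin d) → ℝ)
    (hfc : Continuous f) (hfb : ∃ M : ℝ, ∀ x, |f x| ≤ M)
    (hfp : ContDiff ℝ 2 fp) (hfm : ContDiff ℝ 2 fm)
    (hfpb : ∃ M : ℝ, ∀ x, ‖fderiv ℝ fp x‖ ≤ M ∧ ‖iteratedFDeriv ℝ 2 fp x‖ ≤ M)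
    (hfmb : ∃ M : ℝ, ∀ x, ‖fderiv ℝ fm x‖ ≤ M ∧ ‖iteratedFDeriv ℝ 2 fm x‖ ≤ M)
    (hagreep : ∀ x : EuclideanSpace ℝ (Fin d), 0 ≤ x 0 → f x = fp x)
    (hagreem : ∀ x : EuclideanSpace ℝ (Fin d), x 0 ≤ 0 → f x = fm x)
    (htangent : ∀ x : EuclideanSpace ℝ (Fin d), x 0 = 0 → ∀ j : Fin d, j ≠ 0 →
      fderiv ℝ fp x (EuclideanSpace.single j 1) = fderiv ℝ fm x (EuclideanSpace.single j 1))
    (hglue : ∀ x : EuclideanSpace ℝ (Fin d), x 0 = 0 →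
      pp * fderiv ℝ fp x (EuclideanSpace.single 0 1)
        - pm * fderiv ℝ fm x (EuclideanSpace.single 0 1)
        + ∑ j ∈ Finset.univ.erase (0 : Fin d),
            α j * fderiv ℝ fp x (EuclideanSpace.single j 1) = 0)
    (δ η : ℕ → ℝ) (hδpos : ∀ n, 0 < δ n) (hδ0 : Tendsto δ atTop (𝓝 0))
    (hηnn : ∀ n, 0 ≤ η n) (hηδ : Tendsto (fun n => η n / δ n) atTop (𝓝 0))
    (x : ℕ → EuclideanSpace ℝ (Fin d)) (hx : ∀ n, |x n 0| ≤ η n)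
    (Ωs : ℕ → Type) (mΩ : ∀ n, MeasurableSpace (Ωs n))
    (P : ∀ n, Measure (Ωs n)) (hP : ∀ n, IsProbabilityMeasure (P n))
    (Z : ∀ n, Ωs n → EuclideanSpace ℝ (Fin d)) (hZm : ∀ n, Measurable (Z n))
    (hZ1 : ∀ n, ∀ᵐ ω ∂P n, |Z n ω 0| = δ n)
    (hZp : Tendsto (fun n => ((P n) {ω | Z n ω 0 = δ n}).toReal) atTop (𝓝 pp))
    (hint : ∀ n (j : Fin d), Integrable (fun ω => (Z n ω j - x n j) ^ 2) (P n))
    (hmean : ∀ j : Fin d, j ≠ 0 →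
      Tendsto (fun n => (∫ ω, (Z n ω j - x n j) ∂P n) / δ n) atTop (𝓝 (α j)))
    (hvar : ∀ n (j : Fin d), j ≠ 0 → ∫ ω, (Z n ω j - x n j) ^ 2 ∂P n ≤ C * δ n ^ 2) :
    Tendsto (fun n => ((∫ ω, f (Z n ω) ∂P n) - f (x n)) / δ n) atTop (𝓝 0) := by
  classical
  obtain ⟨Mp, hMp⟩ := hfpb
  obtain ⟨Mm, hMm⟩ := hfmb
  set M : ℝ := max Mp Mm with hMdef
  have hMp' : ∀ z, ‖fderiv ℝ fp z‖ ≤ M ∧ ‖iteratedFDeriv ℝ 2 fp z‖ ≤ M := fun z =>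
    ⟨(hMp z).1.trans (le_max_left _ _), (hMp z).2.trans (le_max_left _ _)⟩
  have hMm' : ∀ z, ‖fderiv ℝ fm z‖ ≤ M ∧ ‖iteratedFDeriv ℝ 2 fm z‖ ≤ M := fun z =>
    ⟨(hMm z).1.trans (le_max_right _ _), (hMm z).2.trans (le_max_right _ _)⟩
  have hM0 : 0 ≤ M := le_trans (norm_nonneg _) (hMp' 0).1
  clear hMp hMm
  -- the projected points
  set y : ℕ → EuclideanSpace ℝ (Fin d) :=
    fun n => x n - (x n 0) • EuclideanSpace.single 0 1 with hydef
  have hy0 : ∀ n, y n 0 = 0 := fun n => by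
    simp [hydef, EuclideanSpace.single_apply]
  have hyj : ∀ n (j : Fin d), j ≠ 0 → y n j = x n j := fun n j hj => by
    simp [hydef, EuclideanSpace.single_apply, hj]
  have hyx : ∀ n, ‖y n - x n‖ = |x n 0| := fun n => by
    have : y n - x n = -((x n 0) • EuclideanSpace.single (0 : Fin d) (1:ℝ)) := by
      rw [hydef]; exact sub_sub_cancel_left _ _
    rw [this, norm_neg, norm_smul, Real.norm_eq_abs, EuclideanSpace.norm_single,
      norm_one, mul_one]
  -- the coefficients
  set a : ℕ → ℝ := fun n => fderiv ℝ fp (y n) (EuclideanSpace.single 0 1) with hadef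
  set b : ℕ → ℝ := fun n => fderiv ℝ fm (y n) (EuclideanSpace.single 0 1) with hbdef
  set c : ℕ → Fin d → ℝ := fun n j => fderiv ℝ fp (y n) (EuclideanSpace.single j 1) with hcdef
  have hcoef : ∀ (L : EuclideanSpace ℝ (Fin d) →L[ℝ] ℝ), ‖L‖ ≤ M → ∀ j : Fin d,
      |L (EuclideanSpace.single j 1)| ≤ M := by
    intro L hL j
    have h1 : ‖EuclideanSpace.single j (1:ℝ)‖ = 1 := by
      rw [EuclideanSpace.norm_single, norm_one]
    rw [← Real.norm_eq_abs]
    calc ‖L (EuclideanSpace.single j 1)‖ ≤ ‖L‖ * ‖EuclideanSpace.single j (1:ℝ)‖ :=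
          L.le_opNorm _
      _ ≤ M := by rw [h1, mul_one]; exact hL
  have ha : ∀ n, |a n| ≤ M := fun n => hcoef _ (hMp' (y n)).1 0
  have hb : ∀ n, |b n| ≤ M := fun n => hcoef _ (hMm' (y n)).1 0
  have hc : ∀ n j, |c n j| ≤ M := fun n j => hcoef _ (hMp' (y n)).1 j
  -- means
  set m : ℕ → Fin d → ℝ := fun n j => ∫ ω, (Z n ω j - x n j) ∂P n with hmdef
  -- measurability of coordinates
  have hZj : ∀ n (j : Fin d), Measurable fun ω => Z n ω j := fun n j =>
    (measurable_pi_apply j).comp ((WithLp.measurable_ofLp 2 _).comp (hZm n))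
  -- integrability of coordinates
  have intj : ∀ n (j : Fin d), Integrable (fun ω => Z n ω j - x n j) (P n) := by
    intro n j
    haveI := hP n
    refine ((hint n j).add (integrable_const 1)).mono'
      (((hZj n j).sub measurable_const).aestronglyMeasurable) ?_
    filter_upwards with ω
    simp only [Pi.add_apply]
    rw [Real.norm_eq_abs]
    nlinarith [sq_nonneg (|Z n ω j - x n j| - 1), abs_nonneg (Z n ω j - x n j),
      sq_abs (Z n ω j - x n j)]
  -- the linear approximation
  set T : ∀ n, Ωs n → ℝ := fun n ω =>
    (if 0 < Z n ω 0 then a n else b n) * Z n ω 0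
      + ∑ j ∈ Finset.univ.erase (0 : Fin d), c n j * (Z n ω j - x n j) with hTdef
  have hsgnmeas : ∀ n, Measurable fun ω => (if 0 < Z n ω 0 then a n else b n) * Z n ω 0 :=
    fun n => (Measurable.ite (measurableSet_lt measurable_const (hZj n 0))
      measurable_const measurable_const).mul (hZj n 0)
  have hintS : ∀ n, Integrable (fun ω => (if 0 < Z n ω 0 then a n else b n) * Z n ω 0) (P n) := by
    intro n
    haveI := hP n
    refine (integrable_const (M * δ n)).mono' (hsgnmeas n).aestronglyMeasurable ?_
    filter_upwards [hZ1 n] with ω hω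
    rw [Real.norm_eq_abs, abs_mul, hω]
    have : |if 0 < Z n ω 0 then a n else b n| ≤ M := by
      split_ifs
      · exact ha n
      · exact hb n
    exact mul_le_mul_of_nonneg_right this (hδpos n).le |>.trans le_rfl
  have hintT : ∀ n, Integrable (T n) (P n) := fun n =>
    (hintS n).add (integrable_finset_sum _ fun j _ => ((intj n j).const_mul (c n j)))
  obtain ⟨Mf, hMf⟩ := hfb
  have hintfZ : ∀ n, Integrable (fun ω => f (Z n ω)) (P n) := by
    intro n
    haveI := hP n
    refine (integrable_const Mf).mono'
      ((hfc.measurable.comp (hZm n)).aestronglyMeasurable) ?_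
    filter_upwards with ω
    rw [Real.norm_eq_abs]; exact hMf _
  -- the events
  set A : ∀ n, Set (Ωs n) := fun n => {ω | Z n ω 0 = δ n} with hAdef
  set B : ∀ n, Set (Ωs n) := fun n => {ω | Z n ω 0 = -δ n} with hBdef
  have hAmeas : ∀ n, MeasurableSet (A n) := fun n =>
    measurableSet_eq_fun (hZj n 0) measurable_const
  have hBmeas : ∀ n, MeasurableSet (B n) := fun n =>
    measurableSet_eq_fun (hZj n 0) measurable_const
  have hABae : ∀ n, ∀ᵐ ω ∂P n, ω ∈ A n ∪ B n := by
    intro n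
    filter_upwards [hZ1 n] with ω hω
    rcases (abs_eq (hδpos n).le).mp hω with h | h
    · exact Or.inl h
    · exact Or.inr h
  have hdisj : ∀ n, Disjoint (A n) (B n) := by
    intro n
    rw [Set.disjoint_left]
    intro ω hA hB
    have h1 : Z n ω 0 = δ n := hA
    have h2 : Z n ω 0 = -δ n := hB
    have := hδpos n
    linarith [h1 ▸ h2]
  have hPAB : ∀ n, (P n (A n)).toReal + (P n (B n)).toReal = 1 := by
    intro n
    haveI := hP n
    have h0 : P n (A n ∪ B n)ᶜ = 0 := by
      have := hABae n
      rwa [ae_iff] at this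
    have h1 : P n (A n ∪ B n) = 1 := by
      have := measure_add_measure_compl ((hAmeas n).union (hBmeas n)) (μ := P n)
      rw [h0, add_zero, measure_univ] at this
      exact this
    have h2 : P n (A n) + P n (B n) = 1 := by
      rw [← measure_union (hdisj n) (hBmeas n), h1]
    rw [← ENNReal.toReal_add (measure_ne_top _ _) (measure_ne_top _ _), h2,
      ENNReal.toReal_one]
  -- integral of the sign part
  have hSeq : ∀ n, (fun ω => (if 0 < Z n ω 0 then a n else b n) * Z n ω 0) =ᵐ[P n]
      (fun ω => Set.indicator (A n) (fun _ => a n * δ n) ω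
        + Set.indicator (B n) (fun _ => -(b n * δ n)) ω) := by
    intro n
    filter_upwards [hZ1 n] with ω hω
    rcases (abs_eq (hδpos n).le).mp hω with h | h
    · have hA : ω ∈ A n := h
      have hB : ω ∉ B n := by
        intro hB
        have h2 : Z n ω 0 = -δ n := hB
        have := hδpos n
        linarith [h ▸ h2]
      rw [Set.indicator_of_mem hA, Set.indicator_of_notMem hB, add_zero, h,
        if_pos (hδpos n)]
    · have hB : ω ∈ B n := h
      have hA : ω ∉ A n := by
        intro hA
        have h2 : Z n ω 0 = δ n := hA
        have := hδpos n
        linarith [h ▸ h2]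
      rw [Set.indicator_of_notMem hA, Set.indicator_of_mem hB, zero_add, h,
        if_neg (by linarith [hδpos n])]
      ring
  have hSint : ∀ n, ∫ ω, (if 0 < Z n ω 0 then a n else b n) * Z n ω 0 ∂P n
      = (P n (A n)).toReal * (a n * δ n) - (P n (B n)).toReal * (b n * δ n) := by
    intro n
    haveI := hP n
    rw [integral_congr_ae (hSeq n),
      integral_add ((integrable_const _).indicator (hAmeas n))
        ((integrable_const _).indicator (hBmeas n)),
      integral_indicator_const _ (hAmeas n), integral_indicator_const _ (hBmeas n)]
    simp only [smul_eq_mul, measureReal_def]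
    ring
  have hTint_eq : ∀ n, ∫ ω, T n ω ∂P n
      = (P n (A n)).toReal * (a n * δ n) - (P n (B n)).toReal * (b n * δ n)
        + ∑ j ∈ Finset.univ.erase (0 : Fin d), c n j * m n j := by
    intro n
    haveI := hP n
    rw [hTdef]
    rw [integral_add (hintS n) (integrable_finset_sum _ fun j _ => (intj n j).const_mul _),
      hSint n, integral_finset_sum _ (fun j _ => (intj n j).const_mul _)]
    congr 1
    refine Finset.sum_congr rfl fun j _ => ?_
    rw [MeasureTheory.integral_const_mul]
  -- expansion of linear maps on Z - y
  have hvcoord : ∀ n (ω : Ωs n) (j : Fin d), (Z n ω - y n) j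
      = if j = 0 then Z n ω 0 else Z n ω j - x n j := by
    intro n ω j
    by_cases hj : j = 0
    · subst hj; simp [hy0 n]
    · simp [hj, hyj n j hj]
  have hsplit : ∀ n (ω : Ωs n) (L : EuclideanSpace ℝ (Fin d) →L[ℝ] ℝ),
      L (Z n ω - y n) = Z n ω 0 * L (EuclideanSpace.single 0 1)
        + ∑ j ∈ Finset.univ.erase (0 : Fin d),
            (Z n ω j - x n j) * L (EuclideanSpace.single j 1) := by
    intro n ω L
    rw [clm_apply_eq_sum' (Z n ω - y n) L]
    rw [← Finset.add_sum_erase _ _ (Finset.mem_univ (0 : Fin d))]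
    congr 1
    · rw [hvcoord n ω 0, if_pos rfl]
    · refine Finset.sum_congr rfl fun j hj => ?_
      rw [hvcoord n ω j, if_neg (Finset.ne_of_mem_erase hj)]
  have hnormsq : ∀ n (ω : Ωs n), ‖Z n ω - y n‖ ^ 2
      = (Z n ω 0) ^ 2 + ∑ j ∈ Finset.univ.erase (0 : Fin d), (Z n ω j - x n j) ^ 2 := by
    intro n ω
    rw [euclidean_norm_sq' (Z n ω - y n)]
    rw [← Finset.add_sum_erase _ _ (Finset.mem_univ (0 : Fin d))]
    congr 1
    · rw [hvcoord n ω 0, if_pos rfl]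
    · refine Finset.sum_congr rfl fun j hj => ?_
      rw [hvcoord n ω j, if_neg (Finset.ne_of_mem_erase hj)]
  -- the Taylor estimate, a.e.
  have hTay : ∀ n, ∀ᵐ ω ∂P n, |f (Z n ω) - f (y n) - T n ω|
      ≤ M * ((Z n ω 0) ^ 2 + ∑ j ∈ Finset.univ.erase (0 : Fin d), (Z n ω j - x n j) ^ 2) := by
    intro n
    filter_upwards [hZ1 n] with ω hω
    rcases (abs_eq (hδpos n).le).mp hω with h | h
    · -- positive side
      have h0 : (0:ℝ) < Z n ω 0 := h ▸ hδpos n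
      have hT : T n ω = fderiv ℝ fp (y n) (Z n ω - y n) := by
        simp only [hTdef]
        rw [hsplit n ω, if_pos h0]
        simp only [hadef, hcdef]
        congr 1
        · ring
        · exact Finset.sum_congr rfl fun j _ => by ring
      rw [hagreep _ h0.le, hagreep (y n) (le_of_eq (hy0 n).symm), hT,
        ← Real.norm_eq_abs, ← hnormsq n ω]
      exact taylor2 hfp (fun z => (hMp' z).2) (y n) (Z n ω)
    · -- negative side
      have h0 : Z n ω 0 ≤ 0 := by rw [h]; linarith [hδpos n]
      have h0' : ¬ (0:ℝ) < Z n ω 0 := not_lt.mpr h0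
      have hT : T n ω = fderiv ℝ fm (y n) (Z n ω - y n) := by
        simp only [hTdef]
        rw [hsplit n ω, if_neg h0']
        simp only [hbdef, hcdef]
        congr 1
        · ring
        · refine Finset.sum_congr rfl fun j hj => ?_
          rw [htangent (y n) (hy0 n) j (Finset.ne_of_mem_erase hj)]
          ring
      rw [hagreem _ h0, hagreem (y n) (le_of_eq (hy0 n)), hT,
        ← Real.norm_eq_abs, ← hnormsq n ω]
      exact taylor2 hfm (fun z => (hMm' z).2) (y n) (Z n ω)
  -- the quadratic remainder function
  set K : ℕ := (Finset.univ.erase (0 : Fin d)).card with hKdef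
  set R : ∀ n, Ωs n → ℝ := fun n ω =>
    (Z n ω 0) ^ 2 + ∑ j ∈ Finset.univ.erase (0 : Fin d), (Z n ω j - x n j) ^ 2 with hRdef
  have hZ0sq : ∀ n, (fun _ : Ωs n => δ n ^ 2) =ᵐ[P n] fun ω => (Z n ω 0) ^ 2 := by
    intro n
    filter_upwards [hZ1 n] with ω hω
    rw [← hω, sq_abs]
  have hRint : ∀ n, Integrable (R n) (P n) := by
    intro n
    haveI := hP n
    exact ((integrable_const (δ n ^ 2)).congr (hZ0sq n)).add
      (integrable_finset_sum _ fun j _ => hint n j)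
  have hRval : ∀ n, ∫ ω, R n ω ∂P n ≤ (1 + K * C) * δ n ^ 2 := by
    intro n
    haveI := hP n
    rw [hRdef]
    rw [integral_add ((integrable_const (δ n ^ 2)).congr (hZ0sq n))
      (integrable_finset_sum _ fun j _ => hint n j)]
    have h1 : ∫ ω, (Z n ω 0) ^ 2 ∂P n = δ n ^ 2 := by
      rw [← integral_congr_ae (hZ0sq n), integral_const]
      simp
    have h2 : ∫ ω, ∑ j ∈ Finset.univ.erase (0 : Fin d), (Z n ω j - x n j) ^ 2 ∂P n
        ≤ K * (C * δ n ^ 2) := by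
      rw [integral_finset_sum _ fun j _ => hint n j]
      calc ∑ j ∈ Finset.univ.erase (0 : Fin d), ∫ ω, (Z n ω j - x n j) ^ 2 ∂P n
          ≤ ∑ j ∈ Finset.univ.erase (0 : Fin d), C * δ n ^ 2 :=
            Finset.sum_le_sum fun j hj => hvar n j (Finset.ne_of_mem_erase hj)
        _ = K * (C * δ n ^ 2) := by rw [Finset.sum_const, hKdef, nsmul_eq_mul]
    rw [h1]
    nlinarith [sq_nonneg (δ n)]
  -- bound on the first term
  have hT1 : ∀ n, |∫ ω, (f (Z n ω) - f (y n) - T n ω) ∂P n| ≤ M * ((1 + K * C) * δ n ^ 2) := by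
    intro n
    haveI := hP n
    have hgint : Integrable (fun ω => f (Z n ω) - f (y n) - T n ω) (P n) :=
      ((hintfZ n).sub (integrable_const _)).sub (hintT n)
    rw [← Real.norm_eq_abs]
    calc ‖∫ ω, (f (Z n ω) - f (y n) - T n ω) ∂P n‖
        ≤ ∫ ω, M * R n ω ∂P n := by
          refine norm_integral_le_of_norm_le ((hRint n).const_mul M) ?_
          filter_upwards [hTay n] with ω hω
          rw [Real.norm_eq_abs]
          exact hω
      _ = M * ∫ ω, R n ω ∂P n := MeasureTheory.integral_const_mul M _
      _ ≤ M * ((1 + K * C) * δ n ^ 2) := mul_le_mul_of_nonneg_left (hRval n) hM0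
  -- Lipschitz bound between x n and y n
  have hLip : ∀ n, |f (y n) - f (x n)| ≤ M * η n := by
    intro n
    have hxynorm : ‖y n - x n‖ = |x n 0| := hyx n
    have hle : |x n 0| ≤ η n := hx n
    rcases le_or_gt 0 (x n 0) with h | h
    · rw [hagreep (x n) h, hagreep (y n) (le_of_eq (hy0 n).symm), ← Real.norm_eq_abs]
      calc ‖fp (y n) - fp (x n)‖ ≤ M * ‖y n - x n‖ :=
            Convex.norm_image_sub_le_of_norm_fderiv_le
              (fun z _ => (hfp.differentiable (by norm_num)) z)
              (fun z _ => (hMp' z).1) convex_univ (Set.mem_univ (x n)) (Set.mem_univ (y n))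
        _ ≤ M * η n := by rw [hxynorm]; exact mul_le_mul_of_nonneg_left hle hM0
    · rw [hagreem (x n) h.le, hagreem (y n) (le_of_eq (hy0 n)), ← Real.norm_eq_abs]
      calc ‖fm (y n) - fm (x n)‖ ≤ M * ‖y n - x n‖ :=
            Convex.norm_image_sub_le_of_norm_fderiv_le
              (fun z _ => (hfm.differentiable (by norm_num)) z)
              (fun z _ => (hMm' z).1) convex_univ (Set.mem_univ (x n)) (Set.mem_univ (y n))
        _ ≤ M * η n := by rw [hxynorm]; exact mul_le_mul_of_nonneg_left hle hM0
  -- probabilities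
  set PA : ℕ → ℝ := fun n => (P n (A n)).toReal with hPAdef
  set PB : ℕ → ℝ := fun n => (P n (B n)).toReal with hPBdef
  have hPAtend : Tendsto PA atTop (𝓝 pp) := hZp
  have hPBtend : Tendsto PB atTop (𝓝 pm) := by
    have h1 : ∀ n, PB n = 1 - PA n := fun n => by
      have := hPAB n; simp only [hPAdef, hPBdef] at *; linarith
    have h2 : Tendsto (fun n => 1 - PA n) atTop (𝓝 (1 - pp)) :=
      tendsto_const_nhds.sub hPAtend
    have h3 : pm = 1 - pp := by linarith
    rw [h3]
    exact h2.congr fun n => (h1 n).symm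
  -- the glue identity at y n
  have hglue' : ∀ n, pp * a n - pm * b n
      + ∑ j ∈ Finset.univ.erase (0 : Fin d), α j * c n j = 0 := fun n =>
    hglue (y n) (hy0 n)
  -- algebraic identity for the T term
  have h2eq : ∀ n, (∫ ω, T n ω ∂P n) / δ n
      = (PA n - pp) * a n - (PB n - pm) * b n
        + ∑ j ∈ Finset.univ.erase (0 : Fin d), c n j * (m n j / δ n - α j) := by
    intro n
    have hδ : δ n ≠ 0 := (hδpos n).ne'
    rw [hTint_eq n]
    have hsum1 : ∑ j ∈ Finset.univ.erase (0 : Fin d), c n j * (m n j / δ n - α j)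
        = (∑ j ∈ Finset.univ.erase (0 : Fin d), c n j * m n j) / δ n
          - ∑ j ∈ Finset.univ.erase (0 : Fin d), α j * c n j := by
      rw [Finset.sum_div, ← Finset.sum_sub_distrib]
      refine Finset.sum_congr rfl fun j _ => ?_
      field_simp
    rw [hsum1]
    have hg := hglue' n
    have hSS : ∑ j ∈ Finset.univ.erase (0 : Fin d), α j * c n j
        = pm * b n - pp * a n := by linarith
    rw [hSS]
    field_simp
    ring
  -- the three limits
  have hlim1 : Tendsto (fun n => (∫ ω, (f (Z n ω) - f (y n) - T n ω) ∂P n) / δ n)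
      atTop (𝓝 0) := by
    apply squeeze_zero_norm (a := fun n => M * ((1 + K * C) * δ n))
    · intro n
      rw [Real.norm_eq_abs, abs_div, abs_of_pos (hδpos n)]
      rw [div_le_iff₀ (hδpos n)]
      calc |∫ ω, (f (Z n ω) - f (y n) - T n ω) ∂P n| ≤ M * ((1 + K * C) * δ n ^ 2) := hT1 n
        _ = M * ((1 + K * C) * δ n) * δ n := by ring
    · have : Tendsto (fun n => M * ((1 + K * C) * δ n)) atTop (𝓝 (M * ((1 + K * C) * 0))) :=
        (tendsto_const_nhds.mul (tendsto_const_nhds.mul hδ0))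
      simpa using this
  have hlim3 : Tendsto (fun n => (f (y n) - f (x n)) / δ n) atTop (𝓝 0) := by
    apply squeeze_zero_norm (a := fun n => M * (η n / δ n))
    · intro n
      rw [Real.norm_eq_abs, abs_div, abs_of_pos (hδpos n)]
      rw [div_le_iff₀ (hδpos n)]
      calc |f (y n) - f (x n)| ≤ M * η n := hLip n
        _ = M * (η n / δ n) * δ n := by rw [mul_assoc, div_mul_cancel₀ _ (hδpos n).ne']
    · have : Tendsto (fun n => M * (η n / δ n)) atTop (𝓝 (M * 0)) :=
        tendsto_const_nhds.mul hηδ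
      simpa using this
  have hlim2 : Tendsto (fun n => (∫ ω, T n ω ∂P n) / δ n) atTop (𝓝 0) := by
    apply squeeze_zero_norm (a := fun n => |PA n - pp| * M + |PB n - pm| * M
      + ∑ j ∈ Finset.univ.erase (0 : Fin d), M * |m n j / δ n - α j|)
    · intro n
      rw [Real.norm_eq_abs, h2eq n]
      calc |(PA n - pp) * a n - (PB n - pm) * b n
            + ∑ j ∈ Finset.univ.erase (0 : Fin d), c n j * (m n j / δ n - α j)|
          ≤ |(PA n - pp) * a n| + |(PB n - pm) * b n|
            + |∑ j ∈ Finset.univ.erase (0 : Fin d), c n j * (m n j / δ n - α j)| := by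
            have := abs_add_le ((PA n - pp) * a n - (PB n - pm) * b n)
              (∑ j ∈ Finset.univ.erase (0 : Fin d), c n j * (m n j / δ n - α j))
            have h2 := abs_sub ((PA n - pp) * a n) ((PB n - pm) * b n)
            linarith
        _ ≤ |PA n - pp| * M + |PB n - pm| * M
            + ∑ j ∈ Finset.univ.erase (0 : Fin d), M * |m n j / δ n - α j| := by
            gcongr ?_ + ?_ + ?_
            · rw [abs_mul]
              exact mul_le_mul_of_nonneg_left (ha n) (abs_nonneg _)
            · rw [abs_mul]
              exact mul_le_mul_of_nonneg_left (hb n) (abs_nonneg _)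
            · refine (Finset.abs_sum_le_sum_abs _ _).trans ?_
              refine Finset.sum_le_sum fun j _ => ?_
              rw [abs_mul]
              exact mul_le_mul_of_nonneg_right (hc n j) (abs_nonneg _)
    · have e1 : Tendsto (fun n => |PA n - pp| * M) atTop (𝓝 (|pp - pp| * M)) :=
        ((hPAtend.sub tendsto_const_nhds).abs).mul tendsto_const_nhds
      have e2 : Tendsto (fun n => |PB n - pm| * M) atTop (𝓝 (|pm - pm| * M)) :=
        ((hPBtend.sub tendsto_const_nhds).abs).mul tendsto_const_nhds
      have e3 : Tendsto (fun n => ∑ j ∈ Finset.univ.erase (0 : Fin d), M * |m n j / δ n - α j|)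
          atTop (𝓝 (∑ j ∈ Finset.univ.erase (0 : Fin d), (0:ℝ))) := by
        refine tendsto_finset_sum _ fun j hj => ?_
        have := (((hmean j (Finset.ne_of_mem_erase hj)).sub (tendsto_const_nhds (x := α j))).abs).const_mul M
        simpa using this
      have := (e1.add e2).add e3
      simpa using this
  -- decomposition of the target
  have hmain : ∀ n, ((∫ ω, f (Z n ω) ∂P n) - f (x n)) / δ n
      = (∫ ω, (f (Z n ω) - f (y n) - T n ω) ∂P n) / δ n
        + (∫ ω, T n ω ∂P n) / δ n + (f (y n) - f (x n)) / δ n := by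
    intro n
    haveI := hP n
    have hδ : δ n ≠ 0 := (hδpos n).ne'
    have hsub : Integrable (fun ω => f (Z n ω) - f (y n)) (P n) :=
      (hintfZ n).sub (integrable_const _)
    rw [integral_sub hsub (hintT n), integral_sub (hintfZ n) (integrable_const _),
      integral_const]
    simp only [measure_univ, probReal_univ, ENNReal.toReal_one, one_smul, smul_eq_mul]
    field_simp
    ring
  have hfinal := (hlim1.add hlim2).add hlim3
  rw [show ((0:ℝ) + 0 + 0) = 0 by ring] at hfinal
  exact hfinal.congr fun n => (hmain n).symm
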